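/- arXiv:math/0307212 — 3 statements merged into one kernel-verified Lean document; each statement's English description precedes it below -/
import Mathlib

section
/- For any torsion-free Christoffel symbols Γ^k_{ij} (smooth and symmetric in the lower indices i, j), the derivations δ and ∇ on Ω anticommute: δ∇ + ∇δ = 0. -/
/-!
Coordinate model of the Fedosov resolution on `M = ℝ^d`, following Dolgushev,
"Covariant and equivariant formality theorems".

An element `a : Omega d` represents the exterior form with values in the formally
completed symmetric algebra of the cotangent bundle,
`a = ∑ a_{m,S}(x) y^m dx^S`, where `m` is the multi-index of exponents of the
commuting formal fibre variables `y^1, …, y^d` and `S` is the (increasingly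
ordered) set of indices of the anticommuting `dx`'s; `a m S : (Fin d → ℝ) → ℝ`
is the corresponding (smooth) coefficient.
-/

noncomputable section
open scoped BigOperators

namespace FedosovModel

/-- Multi-indices: exponents of the formal fibre variables `y`. -/
abbrev Mi (d : ℕ) := Fin d →₀ ℕ

/-- The coordinate model of `Ω(ℝ^d, 𝒮M)`: `a m S x` is the coefficient of the
monomial `y^m dx^S` (with the `dx`'s in increasing order) at the point `x`. -/
abbrev Omega (d : ℕ) := Mi d → Finset (Fin d) → (Fin d → ℝ) → ℝ

variable (d : ℕ)

/-- total `y`-degree of a multi-index -/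
def ydeg (m : Mi d) : ℕ := ∑ i, m i

/-- all coefficients are smooth functions on `ℝ^d` -/
def Smooth (a : Omega d) : Prop := ∀ m S, ContDiff ℝ (⊤ : ℕ∞) (a m S)

/-- `a` is homogeneous of exterior degree `q`, i.e. `a ∈ Ω^q` -/
def ExtDeg (q : ℕ) (a : Omega d) : Prop := ∀ m S, S.card ≠ q → a m S = 0

/-- the sign defined by `dx^i ∧ dx^S = sgn i S • dx^{S ∪ {i}}` for `i ∉ S` -/
def sgn (i : Fin d) (S : Finset (Fin d)) : ℝ :=
  (-1 : ℝ) ^ (S.filter (fun j => j < i)).card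

/-- the projection `σ(a) = a|_{y = dx = 0}` -/
def sigmaOm (a : Omega d) : (Fin d → ℝ) → ℝ := a 0 ∅

/-- a function on `ℝ^d` viewed as an element of `Ω` with no `y`- and `dx`-dependence -/
def ofFun (f : (Fin d → ℝ) → ℝ) : Omega d :=
  fun m S => if m = 0 ∧ S = ∅ then f else 0

/-- the differential `δ = dx^i ∂/∂y^i` -/
def deltaOp (a : Omega d) : Omega d := fun m S x =>
  ∑ i ∈ S, sgn d i (S.erase i) * ((m i : ℝ) + 1) *
    a (m + Finsupp.single i 1) (S.erase i) x

/-- the homotopy operator `δ⁻¹`, acting on a component of `y`-degree `p` and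
exterior degree `q` with `p + q > 0` as `(p+q)⁻¹ y^k ι(∂/∂x^k)`, and as `0`
on the component `p = q = 0`. -/
def deltaInv (a : Omega d) : Omega d := fun m S x =>
  (((ydeg d m + S.card : ℕ) : ℝ))⁻¹ *
    ∑ k : Fin d,
      if k ∉ S ∧ 1 ≤ m k then sgn d k S * a (m - Finsupp.single k 1) (insert k S) x
      else 0

/-- partial derivative `∂f/∂x^i` -/
def pd (i : Fin d) (f : (Fin d → ℝ) → ℝ) : (Fin d → ℝ) → ℝ :=
  fun x => fderiv ℝ f x (Pi.single i 1)

/-- Christoffel symbols: `Γ k i j = Γ^k_{ij}` -/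
abbrev Christoffel (d : ℕ) := Fin d → Fin d → Fin d → (Fin d → ℝ) → ℝ

def SmoothGamma (Γ : Christoffel d) : Prop := ∀ k i j, ContDiff ℝ (⊤ : ℕ∞) (Γ k i j)

def TorsionFree (Γ : Christoffel d) : Prop := ∀ k i j, Γ k i j = Γ k j i

/-- the covariant derivative `∇a = dx^i ∂a/∂x^i − dx^i Γ^k_{ij}(x) y^j ∂a/∂y^k` -/
def nablaOp (Γ : Christoffel d) (a : Omega d) : Omega d := fun m S x =>
  ∑ i ∈ S, sgn d i (S.erase i) *
    (pd d i (a m (S.erase i)) x -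
      ∑ j : Fin d, ∑ k : Fin d,
        if 1 ≤ m j then
          let m' : Mi d := m + Finsupp.single k 1 - Finsupp.single j 1
          Γ k i j x * ((m' k : ℕ) : ℝ) * a m' (S.erase i) x
        else 0)

/-- the Riemann curvature tensor
`(R_{ij})^k_l = ∂_i Γ^k_{jl} − ∂_j Γ^k_{il} + Γ^k_{im} Γ^m_{jl} − Γ^k_{jm} Γ^m_{il}` -/
def Riem (Γ : Christoffel d) (i j k l : Fin d) : (Fin d → ℝ) → ℝ := fun x =>
  pd d i (Γ k j l) x - pd d j (Γ k i l) x +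
    ∑ mm : Fin d, (Γ k i mm x * Γ mm j l x - Γ k j mm x * Γ mm i l x)

/-- the curvature operator `R·a = −(1/2) dx^i dx^j (R_{ij})^k_l y^l ∂a/∂y^k` -/
def curvAct (Γ : Christoffel d) (a : Omega d) : Omega d := fun m S x =>
  -(1/2 : ℝ) * ∑ i ∈ S, ∑ j ∈ S.erase i,
    sgn d i (S.erase i) * sgn d j ((S.erase i).erase j) *
      ∑ k : Fin d, ∑ l : Fin d,
        if 1 ≤ m l then
          let m' : Mi d := m + Finsupp.single k 1 - Finsupp.single l 1
          Riem d Γ i j k l x * ((m' k : ℕ) : ℝ) * a m' ((S.erase i).erase j) x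
        else 0

/-! ### Fiberwise-vector-field-valued one-forms and the Fedosov differential -/

/-- a fiberwise-vector-field-valued one-form `B = dx^k B^j_k(x,y) ∂/∂y^j`:
`B j k m x` is the coefficient of `dx^k y^m ∂/∂y^j` -/
abbrev VF1 (d : ℕ) := Fin d → Fin d → Mi d → (Fin d → ℝ) → ℝ

def SmoothVF1 (A : VF1 d) : Prop := ∀ j k m, ContDiff ℝ (⊤ : ℕ∞) (A j k m)

/-- all terms of `A` have `y`-degree at least 2 -/
def LowDegVanish (A : VF1 d) : Prop := ∀ j k m, ydeg d m < 2 → A j k m = 0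

/-- the action of a fiberwise-vector-field-valued one-form on `Ω` as an odd
derivation: `A·a = dx^k A^j_k(x,y) ∂a/∂y^j` -/
def vact (A : VF1 d) (a : Omega d) : Omega d := fun m S x =>
  ∑ k ∈ S, sgn d k (S.erase k) *
    ∑ j : Fin d, ∑ p ∈ Finset.HasAntidiagonal.antidiagonal m,
      A j k p.1 x * ((p.2 j : ℝ) + 1) * a (p.2 + Finsupp.single j 1) (S.erase k) x

/-- the `∂/∂y^j`-component of a fiberwise-vector-field-valued one-form,
as an element of `Ω` -/
def vf1ToOmega (A : VF1 d) (j : Fin d) : Omega d :=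
  fun m S x => ∑ k : Fin d, if S = {k} then A j k m x else 0

/-- the connection one-form `Γ = −dx^i Γ^k_{ij}(x) y^j ∂/∂y^k` as a
fiberwise-vector-field-valued one-form -/
def GammaVF (Γ : Christoffel d) : VF1 d := fun jf kx m x =>
  -∑ l : Fin d, if m = Finsupp.single l 1 then Γ jf kx l x else 0

/-- the `∂/∂y^k`-component of the curvature
`R = −(1/2) dx^i dx^j (R_{ij})^k_l y^l ∂/∂y^k`, as an element of `Ω` -/
def RVForm (Γ : Christoffel d) (kf : Fin d) : Omega d := fun m S x =>
  -(1/2 : ℝ) * ∑ i : Fin d, ∑ j : Fin d,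
    (if S = {i, j} ∧ i < j then (1 : ℝ) else if S = {i, j} ∧ j < i then -1 else 0) *
      ∑ l : Fin d, if m = Finsupp.single l 1 then Riem d Γ i j kf l x else 0

/-- the normalization `δ⁻¹ A = 0` (componentwise in the fibre index) -/
def DeltaInvVanish (A : VF1 d) : Prop := ∀ j, deltaInv d (vf1ToOmega d A j) = 0

/-- the Fedosov derivation `D = ∇ − δ + A·` -/
def Dfed (Γ : Christoffel d) (A : VF1 d) (a : Omega d) : Omega d :=
  nablaOp d Γ a - deltaOp d a + vact d A a

/-- nilpotency of the Fedosov derivation: `D ∘ D = 0` on `Ω` -/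
def Nilpotent (Γ : Christoffel d) (A : VF1 d) : Prop :=
  ∀ a : Omega d, Smooth d a → Dfed d Γ A (Dfed d Γ A a) = 0

/-- the fixed-point equation `A = δ⁻¹R + δ⁻¹(∇A + (1/2)[A,A])`, componentwise in
the fibre index `j`; here `(∇A)^j = dx^i ∂_{x^i}(A^j) + Γ·(A^j) + A·(Γ^j)` and
`((1/2)[A,A])^j = A·(A^j) = dx^k dx^l A^m_k ∂A^j_l/∂y^m`. -/
def FedosovFixedPoint (Γ : Christoffel d) (A : VF1 d) : Prop :=
  ∀ j, vf1ToOmega d A j =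
    deltaInv d (RVForm d Γ j) +
      deltaInv d (nablaOp d Γ (vf1ToOmega d A j) +
        vact d A (vf1ToOmega d (GammaVF d Γ) j) +
        vact d A (vf1ToOmega d A j))

/-! ### The supercommutative product on `Ω` -/

/-- sign of `dx^S ∧ dx^T = shuffleSgn S T • dx^{S ∪ T}` for disjoint `S`, `T` -/
def shuffleSgn (S T : Finset (Fin d)) : ℝ :=
  (-1 : ℝ) ^ ∑ i ∈ S, (T.filter (fun j => j < i)).card

/-- the supercommutative product of `Ω` -/
def mulOm (a b : Omega d) : Omega d := fun m S x =>
  ∑ T ∈ S.powerset, shuffleSgn d T (S \ T) *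
    ∑ p ∈ Finset.HasAntidiagonal.antidiagonal m, a p.1 T x * b p.2 (S \ T) x

/-- `a` is the flat section of the Fedosov differential extending `a₀`:
`a ∈ Ω⁰`, `Da = 0`, `σ(a) = a₀`. -/
def IsFlatSection (Γ : Christoffel d) (A : VF1 d) (a₀ : (Fin d → ℝ) → ℝ)
    (a : Omega d) : Prop :=
  ExtDeg d 0 a ∧ Smooth d a ∧ Dfed d Γ A a = 0 ∧ sigmaOm d a = a₀

lemma sgn_erase_self (d : ℕ) (i : Fin d) (S : Finset (Fin d)) :
    sgn d i (S.erase i) = sgn d i S := by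
  unfold sgn
  rw [Finset.filter_erase, Finset.erase_eq_of_notMem (by simp)]

lemma sgn_erase_ne (d : ℕ) (i i' : Fin d) (S : Finset (Fin d)) (hi : i ∈ S) (hne : i ≠ i') :
    sgn d i' (S.erase i) = (if i < i' then -1 else 1) * sgn d i' S := by
  unfold sgn
  rw [Finset.filter_erase]
  by_cases h : i < i'
  · have hmem : i ∈ S.filter (fun j => j < i') := by simp [hi, h]
    have hc : (S.filter (fun j => j < i')).card = ((S.filter (fun j => j < i')).erase i).card + 1 := by
      rw [Finset.card_erase_of_mem hmem]
      exact (Nat.succ_pred_eq_of_pos (Finset.card_pos.mpr ⟨i, hmem⟩)).symm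
    rw [hc, pow_succ]
    simp [h]
  · rw [Finset.erase_eq_of_notMem (by simp [h])]
    simp [h]

lemma sgn_pair (d : ℕ) (i i' : Fin d) (S : Finset (Fin d)) (hi : i ∈ S) (hi' : i' ∈ S)
    (hne : i ≠ i') :
    sgn d i (S.erase i) * sgn d i' ((S.erase i).erase i')
      = -(sgn d i' (S.erase i') * sgn d i ((S.erase i').erase i)) := by
  rw [sgn_erase_self, sgn_erase_self, sgn_erase_self, sgn_erase_self]
  rw [sgn_erase_ne d i i' S hi hne, sgn_erase_ne d i' i S hi' hne.symm]
  rcases lt_or_gt_of_ne hne with h | h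
  · simp [h, not_lt_of_gt h]; ring
  · simp [h, not_lt_of_gt h]; ring

lemma sum_erase_antisymm {α} [DecidableEq α] (S : Finset α) (g : α → α → ℝ)
    (h : ∀ i ∈ S, ∀ i' ∈ S, i ≠ i' → g i i' = - g i' i) :
    ∑ i ∈ S, ∑ i' ∈ S.erase i, g i i' = 0 := by
  have hswap : ∑ i ∈ S, ∑ i' ∈ S.erase i, g i i' = ∑ i' ∈ S, ∑ i ∈ S.erase i', g i i' := by
    apply Finset.sum_comm'
    intro x y
    simp only [Finset.mem_erase]
    constructor
    · rintro ⟨hx, hy1, hy2⟩; exact ⟨⟨Ne.symm hy1, hx⟩, hy2⟩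
    · rintro ⟨⟨h1, hx⟩, hy⟩; exact ⟨hx, Ne.symm h1, hy⟩
  have hneg : ∑ i ∈ S, ∑ i' ∈ S.erase i, g i i' = - ∑ i' ∈ S, ∑ i ∈ S.erase i', g i i' := by
    rw [← Finset.sum_neg_distrib]
    apply Finset.sum_congr rfl
    intro i' hi'
    rw [← Finset.sum_neg_distrib]
    apply Finset.sum_congr rfl
    intro i hi
    exact h i' hi' i (Finset.mem_of_mem_erase hi) (Finset.ne_of_mem_erase hi).symm
  linarith [hswap, hneg]

section Aux
variable (d : ℕ) (Γ : Christoffel d) (a : Omega d) (m : Mi d) (S : Finset (Fin d)) (x : Fin d → ℝ)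

def T1 (i i' : Fin d) : ℝ :=
  let mi : Mi d := m + Finsupp.single i 1
  sgn d i (S.erase i) * ((m i : ℝ) + 1) *
    (sgn d i' ((S.erase i).erase i') *
      (pd d i' (a mi ((S.erase i).erase i')) x -
        ∑ j : Fin d, ∑ k : Fin d,
          if 1 ≤ mi j then
            let m' : Mi d := mi + Finsupp.single k 1 - Finsupp.single j 1
            Γ k i' j x * ((m' k : ℕ) : ℝ) * a m' ((S.erase i).erase i') x
          else 0))

def T2 (i i' : Fin d) : ℝ :=
  sgn d i' (S.erase i') *
    (sgn d i ((S.erase i').erase i) * ((m i : ℝ) + 1) *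
        pd d i' (a (m + Finsupp.single i 1) ((S.erase i').erase i)) x -
      ∑ j : Fin d, ∑ k : Fin d,
        if 1 ≤ m j then
          let m' : Mi d := m + Finsupp.single k 1 - Finsupp.single j 1
          Γ k i' j x * ((m' k : ℕ) : ℝ) *
            (sgn d i ((S.erase i').erase i) * ((m' i : ℝ) + 1) *
              a (m' + Finsupp.single i 1) ((S.erase i').erase i) x)
        else 0)

lemma h1 : deltaOp d (nablaOp d Γ a) m S x = ∑ i ∈ S, ∑ i' ∈ S.erase i, T1 d Γ a m S x i i' := by
  unfold deltaOp nablaOp T1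
  apply Finset.sum_congr rfl
  intro i _
  rw [Finset.mul_sum]

lemma pd_deltaOp (ha : Smooth d a) (i' : Fin d) (U : Finset (Fin d)) :
    pd d i' (deltaOp d a m U) x
      = ∑ i ∈ U, sgn d i (U.erase i) * ((m i : ℝ) + 1) *
          pd d i' (a (m + Finsupp.single i 1) (U.erase i)) x := by
  unfold pd deltaOp
  rw [fderiv_fun_sum (fun i _ =>
    (((ha _ _).differentiable (by simp)).differentiableAt).const_mul _)]
  rw [ContinuousLinearMap.sum_apply]
  apply Finset.sum_congr rfl
  intro i _
  rw [fderiv_const_mul (((ha _ _).differentiable (by simp)).differentiableAt)]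
  simp [mul_assoc]

lemma h2 (ha : Smooth d a) :
    nablaOp d Γ (deltaOp d a) m S x = ∑ i' ∈ S, ∑ i ∈ S.erase i', T2 d Γ a m S x i i' := by
  unfold nablaOp
  apply Finset.sum_congr rfl
  intro i' _
  rw [pd_deltaOp d a m x ha i' (S.erase i')]
  have e1 : ∀ j k : Fin d,
      (if 1 ≤ m j then
        let m' : Mi d := m + Finsupp.single k 1 - Finsupp.single j 1
        Γ k i' j x * ((m' k : ℕ) : ℝ) * deltaOp d a m' (S.erase i') x
      else 0)
      = ∑ i ∈ S.erase i',
        (if 1 ≤ m j then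
          let m' : Mi d := m + Finsupp.single k 1 - Finsupp.single j 1
          Γ k i' j x * ((m' k : ℕ) : ℝ) *
            (sgn d i ((S.erase i').erase i) * ((m' i : ℝ) + 1) *
              a (m' + Finsupp.single i 1) ((S.erase i').erase i) x)
        else 0) := by
    intro j k
    by_cases hc : 1 ≤ m j
    · simp only [if_pos hc, deltaOp, Finset.mul_sum]
      try exact Finset.sum_congr rfl fun i _ => by ring
    · simp [if_neg hc]
  simp only [e1]
  have e2 : ∀ j : Fin d, (∑ k : Fin d, ∑ i ∈ S.erase i', (fun j k i => (if 1 ≤ m j then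
          let m' : Mi d := m + Finsupp.single k 1 - Finsupp.single j 1
          Γ k i' j x * ((m' k : ℕ) : ℝ) *
            (sgn d i ((S.erase i').erase i) * ((m' i : ℝ) + 1) *
              a (m' + Finsupp.single i 1) ((S.erase i').erase i) x)
        else 0)) j k i)
      = ∑ i ∈ S.erase i', ∑ k : Fin d, (fun j k i => (if 1 ≤ m j then
          let m' : Mi d := m + Finsupp.single k 1 - Finsupp.single j 1
          Γ k i' j x * ((m' k : ℕ) : ℝ) *
            (sgn d i ((S.erase i').erase i) * ((m' i : ℝ) + 1) *
              a (m' + Finsupp.single i 1) ((S.erase i').erase i) x)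
        else 0)) j k i := fun j => Finset.sum_comm
  simp only [e2]
  rw [Finset.sum_comm]
  rw [← Finset.sum_sub_distrib, Finset.mul_sum]
  apply Finset.sum_congr rfl
  intro i _
  unfold T2
  try rfl

lemma mi_val3 (m : Mi d) (p q r t : Fin d) :
    ((m + Finsupp.single p 1 + Finsupp.single q 1 - Finsupp.single r 1 : Mi d) t)
      = m t + (if p = t then 1 else 0) + (if q = t then 1 else 0) - (if r = t then 1 else 0) := by
  simp [Finsupp.tsub_apply, Finsupp.add_apply, Finsupp.single_apply]

lemma mi_val2 (m : Mi d) (q r t : Fin d) :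
    ((m + Finsupp.single q 1 - Finsupp.single r 1 : Mi d) t)
      = m t + (if q = t then 1 else 0) - (if r = t then 1 else 0) := by
  simp [Finsupp.tsub_apply, Finsupp.add_apply, Finsupp.single_apply]

lemma mi_val1 (m : Mi d) (q t : Fin d) :
    ((m + Finsupp.single q 1 : Mi d) t) = m t + (if q = t then 1 else 0) := by
  simp [Finsupp.add_apply, Finsupp.single_apply]

lemma mi_ext1 (m : Mi d) (i k : Fin d) :
    m + Finsupp.single i 1 + Finsupp.single k 1 - Finsupp.single i 1
      = m + Finsupp.single k 1 := by
  ext t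
  rw [mi_val3, mi_val1]
  split_ifs <;> omega

lemma mi_ext2 (m : Mi d) (i k : Fin d) (h : 1 ≤ m i) :
    m + Finsupp.single k 1 - Finsupp.single i 1 + Finsupp.single i 1
      = m + Finsupp.single k 1 := by
  ext t
  rw [mi_val1 d (m + Finsupp.single k 1 - Finsupp.single i 1), mi_val2, mi_val1]
  split_ifs <;> (try omega) <;> (subst_vars; omega)

lemma mi_ext3 (m : Mi d) (i j k : Fin d) (h : 1 ≤ m j) (hne : j ≠ i) :
    m + Finsupp.single i 1 + Finsupp.single k 1 - Finsupp.single j 1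
      = m + Finsupp.single k 1 - Finsupp.single j 1 + Finsupp.single i 1 := by
  ext t
  rw [mi_val3, mi_val1 d (m + Finsupp.single k 1 - Finsupp.single j 1), mi_val2]
  split_ifs <;> (try omega) <;> (subst_vars; omega)

lemma perjk (U : Finset (Fin d)) (i i' j k : Fin d) :
    ((m i : ℝ) + 1) *
        (if 1 ≤ (m + Finsupp.single i 1 : Mi d) j then
          Γ k i' j x *
            (((m + Finsupp.single i 1 + Finsupp.single k 1 - Finsupp.single j 1 : Mi d) k : ℕ) : ℝ) *
            a (m + Finsupp.single i 1 + Finsupp.single k 1 - Finsupp.single j 1) U x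
        else 0) -
      (if 1 ≤ m j then
        Γ k i' j x * (((m + Finsupp.single k 1 - Finsupp.single j 1 : Mi d) k : ℕ) : ℝ) *
          ((((m + Finsupp.single k 1 - Finsupp.single j 1 : Mi d) i : ℕ) : ℝ) + 1) *
          a (m + Finsupp.single k 1 - Finsupp.single j 1 + Finsupp.single i 1) U x
      else 0)
      = if j = i then ((m k : ℝ) + 1) * Γ k i' j x * a (m + Finsupp.single k 1) U x else 0 := by
  by_cases hji : j = i
  · subst hji
    rw [if_pos rfl]
    have hc : 1 ≤ (m + Finsupp.single j 1 : Mi d) j := by rw [mi_val1]; simp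
    rw [if_pos hc, mi_ext1]
    have v1 : ((m + Finsupp.single k 1 : Mi d) k) = m k + 1 := by rw [mi_val1]; simp
    by_cases hmj : 1 ≤ m j
    · rw [if_pos hmj, mi_ext2 d m j k hmj, v1]
      rcases eq_or_ne j k with rfl | hjk
      · have v2 : ((m + Finsupp.single j 1 - Finsupp.single j 1 : Mi d) j) = m j := by
          rw [mi_val2]; simp
        rw [v2]
        push_cast
        ring
      · have v2 : ((m + Finsupp.single k 1 - Finsupp.single j 1 : Mi d) k) = m k + 1 := by
          rw [mi_val2]; simp [hjk]
        have v3 : ((m + Finsupp.single k 1 - Finsupp.single j 1 : Mi d) j) = m j - 1 := by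
          rw [mi_val2]; simp [Ne.symm hjk]
        rw [v2, v3, Nat.cast_sub hmj]
        push_cast
        ring
    · rw [if_neg hmj, v1]
      have hmj0 : (m j : ℝ) = 0 := by norm_cast; omega
      rw [hmj0]
      push_cast
      ring
  · rw [if_neg hji]
    have hcond : (m + Finsupp.single i 1 : Mi d) j = m j := by
      rw [mi_val1]; simp [if_neg (show ¬ i = j from fun h => hji h.symm)]
    by_cases hmj : 1 ≤ m j
    · rw [if_pos (by rw [hcond]; exact hmj), if_pos hmj, mi_ext3 d m i j k hmj hji]
      have w2 : ((m + Finsupp.single k 1 - Finsupp.single j 1 : Mi d) k)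
          = m k + 1 - (if j = k then 1 else 0) := by rw [mi_val2]; simp
      have w3 : ((m + Finsupp.single k 1 - Finsupp.single j 1 : Mi d) i)
          = m i + (if k = i then 1 else 0) := by rw [mi_val2]; simp [hji]
      have w1 : ((m + Finsupp.single k 1 - Finsupp.single j 1 + Finsupp.single i 1 : Mi d) k)
          = m k + 1 - (if j = k then 1 else 0) + (if i = k then 1 else 0) := by
        rw [mi_val1, w2]
      rw [w1, w2, w3]
      rcases eq_or_ne j k with rfl | hjk
      · have hik : i ≠ j := fun h => hji h.symm
        simp only [if_pos rfl, if_neg hik, if_neg (fun h : j = i => hji h),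
          Nat.add_sub_cancel, Nat.add_zero, Nat.zero_add, add_zero]
        push_cast
        ring
      · simp only [if_neg hjk, Nat.sub_zero]
        rcases eq_or_ne i k with rfl | hik
        · simp only [if_pos rfl]
          push_cast
          ring
        · simp only [if_neg hik, if_neg (fun h : k = i => hik h.symm), add_zero]
          push_cast
          ring
    · rw [if_neg (by rw [hcond]; exact hmj), if_neg hmj]
      ring

lemma key (i i' : Fin d) (hi : i ∈ S) (hi' : i' ∈ S) (hne : i ≠ i') :
    T1 d Γ a m S x i i' + T2 d Γ a m S x i i'
      = (sgn d i (S.erase i) * sgn d i' ((S.erase i).erase i')) *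
          (-(∑ k : Fin d, ((m k : ℝ) + 1) * Γ k i' i x *
              a (m + Finsupp.single k 1) ((S.erase i).erase i') x)) := by
  have hrc : (S.erase i').erase i = (S.erase i).erase i' := Finset.erase_right_comm
  simp only [T1, T2, hrc]
  set U := (S.erase i).erase i' with hU
  set s1 := sgn d i (S.erase i) with hs1
  set s2 := sgn d i' U with hs2
  set s3 := sgn d i' (S.erase i') with hs3
  set s4 := sgn d i U with hs4
  have hs : s3 * s4 = -(s1 * s2) := by
    have h := sgn_pair d i i' S hi hi' hne
    rw [hrc] at h
    rw [← hs1, ← hs2, ← hs3, ← hs4] at h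
    linarith
  set P := pd d i' (a (m + Finsupp.single i 1) U) x with hP
  have hpull :
      (∑ j : Fin d, ∑ k : Fin d,
        if 1 ≤ m j then
          Γ k i' j x * (((m + Finsupp.single k 1 - Finsupp.single j 1 : Mi d) k : ℕ) : ℝ) *
            (s4 * ((((m + Finsupp.single k 1 - Finsupp.single j 1 : Mi d) i : ℕ) : ℝ) + 1) *
              a (m + Finsupp.single k 1 - Finsupp.single j 1 + Finsupp.single i 1) U x)
        else 0)
      = s4 * ∑ j : Fin d, ∑ k : Fin d,
          if 1 ≤ m j then
            Γ k i' j x * (((m + Finsupp.single k 1 - Finsupp.single j 1 : Mi d) k : ℕ) : ℝ) *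
              ((((m + Finsupp.single k 1 - Finsupp.single j 1 : Mi d) i : ℕ) : ℝ) + 1) *
              a (m + Finsupp.single k 1 - Finsupp.single j 1 + Finsupp.single i 1) U x
          else 0 := by
    rw [Finset.mul_sum]
    refine Finset.sum_congr rfl fun j _ => ?_
    rw [Finset.mul_sum]
    refine Finset.sum_congr rfl fun k _ => ?_
    split <;> ring
  rw [hpull]
  set Y := ∑ j : Fin d, ∑ k : Fin d,
      if 1 ≤ m j then
        Γ k i' j x * (((m + Finsupp.single k 1 - Finsupp.single j 1 : Mi d) k : ℕ) : ℝ) *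
          ((((m + Finsupp.single k 1 - Finsupp.single j 1 : Mi d) i : ℕ) : ℝ) + 1) *
          a (m + Finsupp.single k 1 - Finsupp.single j 1 + Finsupp.single i 1) U x
      else 0 with hY
  set G := ∑ j : Fin d, ∑ k : Fin d,
      if 1 ≤ (m + Finsupp.single i 1 : Mi d) j then
        Γ k i' j x *
          (((m + Finsupp.single i 1 + Finsupp.single k 1 - Finsupp.single j 1 : Mi d) k : ℕ) : ℝ) *
          a (m + Finsupp.single i 1 + Finsupp.single k 1 - Finsupp.single j 1) U x
      else 0 with hG
  set W := ∑ k : Fin d, ((m k : ℝ) + 1) * Γ k i' i x * a (m + Finsupp.single k 1) U x with hW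
  have hGY : ((m i : ℝ) + 1) * G - Y = W := by
    rw [hG, hY, hW, Finset.mul_sum, ← Finset.sum_sub_distrib]
    have : ∀ j : Fin d, (((m i : ℝ) + 1) * ∑ k : Fin d,
        (if 1 ≤ (m + Finsupp.single i 1 : Mi d) j then
          Γ k i' j x *
            (((m + Finsupp.single i 1 + Finsupp.single k 1 - Finsupp.single j 1 : Mi d) k : ℕ) : ℝ) *
            a (m + Finsupp.single i 1 + Finsupp.single k 1 - Finsupp.single j 1) U x
        else 0)) -
        (∑ k : Fin d, if 1 ≤ m j then
          Γ k i' j x * (((m + Finsupp.single k 1 - Finsupp.single j 1 : Mi d) k : ℕ) : ℝ) *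
            ((((m + Finsupp.single k 1 - Finsupp.single j 1 : Mi d) i : ℕ) : ℝ) + 1) *
            a (m + Finsupp.single k 1 - Finsupp.single j 1 + Finsupp.single i 1) U x
        else 0)
        = if j = i then ∑ k : Fin d, ((m k : ℝ) + 1) * Γ k i' j x *
            a (m + Finsupp.single k 1) U x else 0 := by
      intro j
      rw [Finset.mul_sum, ← Finset.sum_sub_distrib]
      rw [show (if j = i then ∑ k : Fin d, ((m k : ℝ) + 1) * Γ k i' j x *
            a (m + Finsupp.single k 1) U x else 0)
          = ∑ k : Fin d, if j = i then ((m k : ℝ) + 1) * Γ k i' j x *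
            a (m + Finsupp.single k 1) U x else 0 by split <;> simp]
      exact Finset.sum_congr rfl fun k _ => perjk d Γ a m x U i i' j k
    simp only [this]
    rw [Finset.sum_ite_eq' Finset.univ i]
    simp
  linear_combination (((m i : ℝ) + 1) * P - Y) * hs - (s1 * s2) * hGY

end Aux


/-- For any torsion-free Christoffel symbols `Γ^k_{ij}` (smooth
and symmetric in the lower indices `i`, `j`), the derivations `δ` and `∇` on `Ω`
anticommute: `δ∇ + ∇δ = 0`. -/
theorem delta_nabla_anticommute (d : ℕ) (hd : 1 ≤ d) (Γ : Christoffel d)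
    (hΓ : SmoothGamma d Γ) (hsym : TorsionFree d Γ) :
    ∀ a : Omega d, Smooth d a →
      deltaOp d (nablaOp d Γ a) + nablaOp d Γ (deltaOp d a) = 0 := by
  intro a ha
  funext m S x
  have hz : (0 : Omega d) m S x = 0 := rfl
  show deltaOp d (nablaOp d Γ a) m S x + nablaOp d Γ (deltaOp d a) m S x = (0 : Omega d) m S x
  rw [hz, h1 d Γ a m S x, h2 d Γ a m S x ha]
  have hswap : ∑ i' ∈ S, ∑ i ∈ S.erase i', T2 d Γ a m S x i i'
      = ∑ i ∈ S, ∑ i' ∈ S.erase i, T2 d Γ a m S x i i' := by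
    apply Finset.sum_comm'
    intro u v
    simp only [Finset.mem_erase]
    constructor
    · rintro ⟨hu, hv1, hv2⟩; exact ⟨⟨Ne.symm hv1, hu⟩, hv2⟩
    · rintro ⟨⟨hh, hu⟩, hv⟩; exact ⟨hu, Ne.symm hh, hv⟩
  rw [hswap, ← Finset.sum_add_distrib]
  simp only [← Finset.sum_add_distrib]
  apply sum_erase_antisymm
  intro i hi i' hi' hne
  rw [key d Γ a m S x i i' hi hi' hne, key d Γ a m S x i' i hi' hi hne.symm]
  have hrc : (S.erase i').erase i = (S.erase i).erase i' := Finset.erase_right_comm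
  rw [hrc]
  have hW : ∑ k : Fin d, ((m k : ℝ) + 1) * Γ k i i' x *
        a (m + Finsupp.single k 1) ((S.erase i).erase i') x
      = ∑ k : Fin d, ((m k : ℝ) + 1) * Γ k i' i x *
        a (m + Finsupp.single k 1) ((S.erase i).erase i') x :=
    Finset.sum_congr rfl fun k _ => by rw [hsym k i i']
  rw [hW]
  have h := sgn_pair d i i' S hi hi' hne
  rw [hrc] at h
  linear_combination (-(∑ k : Fin d, ((m k : ℝ) + 1) * Γ k i' i x *
    a (m + Finsupp.single k 1) ((S.erase i).erase i') x)) * h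
end FedosovModel
end
end

section
/- For smooth Christoffel symbols Γ^k_{ij} symmetric in i, j, the square of the covariant derivation ∇ on Ω is the action of the curvature: ∇²a = R·a for all a ∈ Ω, where R·a = −(1/2) dx^i dx^j (R_{ij})^k_l(x) y^l ∂a/∂y^k and (R_{ij})^k_l = ∂_{x^i}Γ^k_{jl} − ∂_{x^j}Γ^k_{il} + Γ^k_{im}Γ^m_{jl} − Γ^k_{jm}Γ^m_{il} is the Riemann curvature tensor of the connection. -/
/-!
Coordinate model of the Fedosov resolution on `M = ℝ^d`, following Dolgushev,
"Covariant and equivariant formality theorems".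

An element `a : Omega d` represents the exterior form with values in the formally
completed symmetric algebra of the cotangent bundle,
`a = ∑ a_{m,S}(x) y^m dx^S`, where `m` is the multi-index of exponents of the
commuting formal fibre variables `y^1, …, y^d` and `S` is the (increasingly
ordered) set of indices of the anticommuting `dx`'s; `a m S : (Fin d → ℝ) → ℝ`
is the corresponding (smooth) coefficient.
-/

noncomputable section
open scoped BigOperators

namespace FedosovModel

variable (d : ℕ)

/-! ### Auxiliary machinery for Statement 6 -/
section NablaSq

variable {d : ℕ}

lemma top_le' : ((1:ℕ∞) : WithTop ℕ∞) ≤ ((⊤:ℕ∞) : WithTop ℕ∞) := by norm_cast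
lemma hTopAdd : ((⊤:ℕ∞) : WithTop ℕ∞) + 1 ≤ ((⊤:ℕ∞) : WithTop ℕ∞) := by
  norm_cast

/-- shift of a multi-index: the effect of `y^l ∂/∂y^k` on exponents -/
def sig (l k : Fin d) (m : Mi d) : Mi d := m + Finsupp.single k 1 - Finsupp.single l 1

lemma sig_apply (l k : Fin d) (m : Mi d) (a : Fin d) :
    sig l k m a = m a + (if k = a then 1 else 0) - (if l = a then 1 else 0) := by
  simp [sig, Finsupp.tsub_apply, Finsupp.single_apply]

/-- the coefficient operator representing `y^l ∂/∂y^k` -/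
def Eop (l k : Fin d) (b : Mi d → (Fin d → ℝ) → ℝ) : Mi d → (Fin d → ℝ) → ℝ :=
  fun m x => if 1 ≤ m l then (sig l k m k : ℝ) * b (sig l k m) x else 0

/-- the operator `Γ^k_{il} y^l ∂/∂y^k` -/
def Gop (Γ : Christoffel d) (i : Fin d) (b : Mi d → (Fin d → ℝ) → ℝ) :
    Mi d → (Fin d → ℝ) → ℝ :=
  fun m x => ∑ l : Fin d, ∑ k : Fin d, Γ k i l x * Eop l k b m x

/-- the covariant derivative in direction `i`, on coefficient families -/
def covD (Γ : Christoffel d) (i : Fin d) (b : Mi d → (Fin d → ℝ) → ℝ) :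
    Mi d → (Fin d → ℝ) → ℝ :=
  fun m x => pd d i (b m) x - Gop Γ i b m x

/-- smooth coefficient family -/
def SmoothB (b : Mi d → (Fin d → ℝ) → ℝ) : Prop := ∀ m, ContDiff ℝ (⊤ : ℕ∞) (b m)

lemma contDiff_pd {f : (Fin d → ℝ) → ℝ} (hf : ContDiff ℝ (⊤:ℕ∞) f) (i : Fin d) :
    ContDiff ℝ (⊤:ℕ∞) (pd d i f) := by
  have h1 : ContDiff ℝ ((⊤:ℕ∞) : WithTop ℕ∞) (fderiv ℝ f) := hf.fderiv_right hTopAdd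
  exact h1.clm_apply contDiff_const

lemma diffAt {f : (Fin d → ℝ) → ℝ} (hf : ContDiff ℝ (⊤:ℕ∞) f) (x : Fin d → ℝ) :
    DifferentiableAt ℝ f x := (hf.differentiable (by simp)) x

lemma pd_sub {f g : (Fin d → ℝ) → ℝ} (hf : ContDiff ℝ (⊤:ℕ∞) f)
    (hg : ContDiff ℝ (⊤:ℕ∞) g) (i : Fin d) (x : Fin d → ℝ) :
    pd d i (fun y => f y - g y) x = pd d i f x - pd d i g x := by
  simp [pd, fderiv_fun_sub (diffAt hf x) (diffAt hg x)]

lemma pd_mul {f g : (Fin d → ℝ) → ℝ} (hf : ContDiff ℝ (⊤:ℕ∞) f)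
    (hg : ContDiff ℝ (⊤:ℕ∞) g) (i : Fin d) (x : Fin d → ℝ) :
    pd d i (fun y => f y * g y) x = pd d i f x * g x + f x * pd d i g x := by
  simp [pd, fderiv_fun_mul (diffAt hf x) (diffAt hg x)]
  ring

lemma pd_const_mul {f : (Fin d → ℝ) → ℝ} (hf : ContDiff ℝ (⊤:ℕ∞) f) (c : ℝ)
    (i : Fin d) (x : Fin d → ℝ) :
    pd d i (fun y => c * f y) x = c * pd d i f x := by
  simp [pd, fderiv_const_mul (diffAt hf x) c]

lemma pd_sum {ι : Type*} (s : Finset ι) (f : ι → (Fin d → ℝ) → ℝ)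
    (hf : ∀ j ∈ s, ContDiff ℝ (⊤:ℕ∞) (f j)) (i : Fin d) (x : Fin d → ℝ) :
    pd d i (fun y => ∑ j ∈ s, f j y) x = ∑ j ∈ s, pd d i (f j) x := by
  simp [pd, fderiv_fun_sum (fun j hj => diffAt (hf j hj) x)]

/-- Clairaut: partial derivatives of smooth functions commute -/
lemma pd_comm {f : (Fin d → ℝ) → ℝ} (hf : ContDiff ℝ (⊤:ℕ∞) f) (i j : Fin d)
    (x : Fin d → ℝ) : pd d i (pd d j f) x = pd d j (pd d i f) x := by
  have hf' : ContDiff ℝ ((⊤:ℕ∞) : WithTop ℕ∞) (fderiv ℝ f) := hf.fderiv_right hTopAdd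
  have h1 : DifferentiableAt ℝ (fderiv ℝ f) x := (hf'.differentiable (by simp)) x
  show fderiv ℝ (fun y => fderiv ℝ f y (Pi.single j 1)) x (Pi.single i 1)
      = fderiv ℝ (fun y => fderiv ℝ f y (Pi.single i 1)) x (Pi.single j 1)
  rw [fderiv_clm_apply h1 (differentiableAt_const _),
    fderiv_clm_apply h1 (differentiableAt_const _)]
  simp
  have := (hf.contDiffAt (x := x)).isSymmSndFDerivAt (n := ((⊤:ℕ∞):WithTop ℕ∞))
    (by rw [minSmoothness_of_isRCLikeNormedField]; exact (WithTop.coe_le_coe.mpr (le_top : (2:ℕ∞) ≤ ⊤) : ((2:ℕ∞) : WithTop ℕ∞) ≤ _))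
  exact this _ _

lemma sig_sig_comm (l k l' k' : Fin d) (m : Mi d) (h1 : 1 ≤ m l) (h2 : 1 ≤ m l') :
    sig l' k' (sig l k m) = sig l k (sig l' k' m) := by
  ext a
  simp only [sig_apply]
  split_ifs <;> subst_vars <;> omega

lemma sig_cast (l k : Fin d) (m : Mi d) (a : Fin d)
    (h : l = a → 1 ≤ m a + (if k = a then 1 else 0)) :
    ((sig l k m a : ℕ) : ℤ) = (m a : ℤ) + (if k = a then 1 else 0) - (if l = a then 1 else 0) := by
  rw [sig_apply]
  split_ifs with h1 h2 h2 <;> simp_all <;> omega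

lemma sig_cast_k (l k : Fin d) (m : Mi d) :
    ((sig l k m k : ℕ) : ℤ) = (m k : ℤ) + 1 - (if l = k then 1 else 0) := by
  rw [sig_cast l k m k (fun _ => by simp)] ; simp

set_option maxHeartbeats 1000000 in
lemma coeff_master (l k l' k' : Fin d) (m : Mi d) (h1 : 1 ≤ m l) (h2 : 1 ≤ m l') :
    (sig l k m k : ℤ) * (sig l' k' (sig l k m) k' : ℤ)
      - (sig l' k' m k' : ℤ) * (sig l k (sig l' k' m) k : ℤ)
    = (if k = l' then (sig l k' m k' : ℤ) else 0)
      - (if k' = l then (sig l' k m k : ℤ) else 0) := by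
  rw [sig_cast_k l k m, sig_cast_k l' k' (sig l k m),
    sig_cast l k m k' (fun h => le_trans (h ▸ h1) (Nat.le_add_right _ _)),
    sig_cast_k l' k' m, sig_cast_k l k (sig l' k' m),
    sig_cast l' k' m k (fun h => le_trans (h ▸ h2) (Nat.le_add_right _ _)),
    sig_cast_k l k' m, sig_cast_k l' k m]
  split_ifs <;> subst_vars <;>
    first
      | ring1
      | omega
      | contradiction
      | simp_all

lemma sig_self (l : Fin d) (m : Mi d) : sig l l m = m := by
  ext a; simp only [sig_apply]; split_ifs <;> omega

set_option maxHeartbeats 1000000 in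
/-- commutator of the operators `y^l ∂_k` and `y^{l'} ∂_{k'}` -/
lemma Eop_comm (l k l' k' : Fin d) (b : Mi d → (Fin d → ℝ) → ℝ) (m : Mi d)
    (x : Fin d → ℝ) :
    Eop l k (Eop l' k' b) m x - Eop l' k' (Eop l k b) m x =
      (if k = l' then Eop l k' b m x else 0) - (if k' = l then Eop l' k b m x else 0) := by
  classical
  by_cases h1 : 1 ≤ m l <;> by_cases h2 : 1 ≤ m l'
  · -- both guards hold
    by_cases g1 : 1 ≤ sig l k m l' <;> by_cases g2 : 1 ≤ sig l' k' m l
    · have hM := sig_sig_comm l k l' k' m h1 h2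
      have key := coeff_master l k l' k' m h1 h2
      rw [hM] at key
      simp only [Eop, if_pos h1, if_pos h2, if_pos g1, if_pos g2, hM]
      by_cases hk : k = l' <;> by_cases hk' : k' = l
      · have hA : sig l k' m = sig l k (sig l' k' m) := by
          ext a; simp only [sig_apply]; split_ifs <;> subst_vars <;> omega
        have hB : sig l' k m = sig l k (sig l' k' m) := by
          ext a; simp only [sig_apply]; split_ifs <;> subst_vars <;> omega
        rw [if_pos hk, if_pos hk'] at key ⊢
        rw [hA, hB] at key ⊢
        have keyR := congrArg (fun z : ℤ => (z : ℝ)) key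
        push_cast at keyR
        linear_combination (b (sig l k (sig l' k' m)) x) * keyR
      · have hA : sig l k' m = sig l k (sig l' k' m) := by
          ext a; simp only [sig_apply]; split_ifs <;> subst_vars <;> omega
        rw [if_pos hk, if_neg hk'] at key ⊢
        rw [hA] at key ⊢
        have keyR := congrArg (fun z : ℤ => (z : ℝ)) key
        push_cast at keyR
        linear_combination (b (sig l k (sig l' k' m)) x) * keyR
      · have hB : sig l' k m = sig l k (sig l' k' m) := by
          ext a; simp only [sig_apply]; split_ifs <;> subst_vars <;> omega
        rw [if_neg hk, if_pos hk'] at key ⊢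
        rw [hB] at key ⊢
        have keyR := congrArg (fun z : ℤ => (z : ℝ)) key
        push_cast at keyR
        linear_combination (b (sig l k (sig l' k' m)) x) * keyR
      · rw [if_neg hk, if_neg hk'] at key ⊢
        have keyR := congrArg (fun z : ℤ => (z : ℝ)) key
        push_cast at keyR
        linear_combination (b (sig l k (sig l' k' m)) x) * keyR
    · -- g1, ¬g2 : forces k' ≠ l, l' = l, m l = 1, k = l
      have hk'l : ¬ k' = l := by
        intro h; apply g2; rw [sig_apply, if_pos h]; split_ifs <;> omega
      have hll : l' = l := by
        by_contra hll; apply g2; rw [sig_apply, if_neg hk'l, if_neg hll]; omega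
      rw [hll] at g1 g2 h2
      have hml : m l = 1 := by
        rw [sig_apply, if_neg hk'l, if_pos rfl] at g2; omega
      have hkl : k = l := by
        by_contra h; rw [sig_apply, if_neg h, if_pos rfl] at g1; omega
      rw [hll, hkl]
      have hg : ¬ 1 ≤ sig l k' m l := by
        rw [sig_apply, if_neg hk'l, if_pos rfl]; omega
      simp only [Eop, sig_self, if_pos h1, if_neg hg, if_pos rfl, if_neg hk'l, hml,
        Nat.cast_one, one_mul, mul_zero, sub_zero]
      norm_num
    · -- ¬g1, g2 : forces k ≠ l', l = l', m l = 1, k' = l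
      have hkl' : ¬ k = l' := by
        intro h; apply g1; rw [sig_apply, if_pos h]; split_ifs <;> omega
      have hll : l' = l := by
        by_contra hll; apply g1
        rw [sig_apply, if_neg hkl', if_neg (fun h => hll h.symm)]; omega
      rw [hll] at g1 g2 h2
      rw [hll] at hkl'
      have hml : m l = 1 := by
        rw [sig_apply, if_neg hkl', if_pos rfl] at g1; omega
      have hkl : k' = l := by
        by_contra h; rw [sig_apply, if_neg h, if_pos rfl] at g2; omega
      rw [hll, hkl]
      have hg : ¬ 1 ≤ sig l k m l := g1
      simp only [Eop, sig_self, if_pos h1, if_neg hg, if_pos rfl, if_neg hkl', hml,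
        Nat.cast_one, one_mul, mul_zero, zero_sub]
      norm_num
    · -- ¬g1, ¬g2 : everything vanishes
      have hkl' : ¬ k = l' := by
        intro h; apply g1; rw [sig_apply, if_pos h]; split_ifs <;> omega
      have hk'l : ¬ k' = l := by
        intro h; apply g2; rw [sig_apply, if_pos h]; split_ifs <;> omega
      simp only [Eop, if_pos h1, if_pos h2, if_neg g1, if_neg g2, if_neg hkl', if_neg hk'l,
        mul_zero, sub_zero, sub_self]
  · -- h1, ¬h2
    by_cases hk : k = l'
    · subst hk
      have hlk : ¬ l = k := fun h => h2 (h ▸ h1)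
      have hg : 1 ≤ sig l k m k := by rw [sig_apply, if_pos rfl, if_neg hlk]; omega
      have hc1 : sig l k m k = 1 := by rw [sig_apply, if_pos rfl, if_neg hlk]; omega
      have hM : sig k k' (sig l k m) = sig l k' m := by
        ext a; simp only [sig_apply]; split_ifs <;> subst_vars <;> omega
      simp only [Eop, if_pos h1, if_neg h2, if_pos hg, if_pos rfl, hM, hc1,
        Nat.cast_one, one_mul, mul_zero, sub_zero]
      split_ifs <;> simp_all
    · have hll : ¬ l = l' := fun h => h2 (h ▸ h1)
      have hg : ¬ 1 ≤ sig l k m l' := by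
        rw [sig_apply, if_neg hk, if_neg hll]; omega
      simp only [Eop, if_pos h1, if_neg h2, if_neg hg, if_neg hk, mul_zero, sub_zero]
      split_ifs <;> simp_all
  · -- ¬h1, h2
    by_cases hk' : k' = l
    · subst hk'
      have hlk : ¬ l' = k' := fun h => h1 (h ▸ h2)
      have hg : 1 ≤ sig l' k' m k' := by rw [sig_apply, if_pos rfl, if_neg hlk]; omega
      have hc1 : sig l' k' m k' = 1 := by rw [sig_apply, if_pos rfl, if_neg hlk]; omega
      have hM : sig k' k (sig l' k' m) = sig l' k m := by
        ext a; simp only [sig_apply]; split_ifs <;> subst_vars <;> omega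
      simp only [Eop, if_pos h2, if_neg h1, if_pos hg, if_pos rfl, hM, hc1,
        Nat.cast_one, one_mul, mul_zero, zero_sub]
      split_ifs <;> simp_all
    · have hll : ¬ l' = l := fun h => h1 (h ▸ h2)
      have hg : ¬ 1 ≤ sig l' k' m l := by
        rw [sig_apply, if_neg hk', if_neg hll]; omega
      simp only [Eop, if_pos h2, if_neg h1, if_neg hg, if_neg hk', mul_zero, zero_sub]
      split_ifs <;> simp_all
  · simp [Eop, h1, h2]

lemma Eop_sum' {ι : Type*} (t : Finset ι) (H : ι → Mi d → (Fin d → ℝ) → ℝ)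
    (l k : Fin d) (m : Mi d) (x : Fin d → ℝ) :
    Eop l k (fun n y => ∑ p ∈ t, H p n y) m x = ∑ p ∈ t, Eop l k (H p) m x := by
  unfold Eop; split_ifs with h
  · rw [Finset.mul_sum]
  · simp

lemma Eop_smul_fun (s : (Fin d → ℝ) → ℝ) (H : Mi d → (Fin d → ℝ) → ℝ)
    (l k : Fin d) (m : Mi d) (x : Fin d → ℝ) :
    Eop l k (fun n y => s y * H n y) m x = s x * Eop l k H m x := by
  unfold Eop; split_ifs with h <;> ring

lemma Eop_sub (f g : Mi d → (Fin d → ℝ) → ℝ) (l k : Fin d) (m : Mi d) (x : Fin d → ℝ) :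
    Eop l k (fun n y => f n y - g n y) m x = Eop l k f m x - Eop l k g m x := by
  unfold Eop; split_ifs with h <;> ring

lemma contDiff_Eop {b : Mi d → (Fin d → ℝ) → ℝ} (hb : SmoothB b) (l k : Fin d) (m : Mi d) :
    ContDiff ℝ (⊤:ℕ∞) (fun x => Eop l k b m x) := by
  unfold Eop; split_ifs with h
  · exact contDiff_const.mul (hb _)
  · exact contDiff_const

lemma pd_Eop {b : Mi d → (Fin d → ℝ) → ℝ} (hb : SmoothB b) (l k i : Fin d) (m : Mi d)
    (x : Fin d → ℝ) :
    pd d i (fun y => Eop l k b m y) x = Eop l k (fun n => pd d i (b n)) m x := by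
  unfold Eop; split_ifs with h
  · exact pd_const_mul (hb _) _ i x
  · simp [pd]

lemma contDiff_Gop {Γ : Christoffel d} (hΓ : SmoothGamma d Γ)
    {b : Mi d → (Fin d → ℝ) → ℝ} (hb : SmoothB b) (i : Fin d) (m : Mi d) :
    ContDiff ℝ (⊤:ℕ∞) (fun x => Gop Γ i b m x) := by
  unfold Gop
  apply ContDiff.sum; intro l _
  apply ContDiff.sum; intro k _
  exact (hΓ k i l).mul (contDiff_Eop hb l k m)

lemma smoothB_covD {Γ : Christoffel d} (hΓ : SmoothGamma d Γ)
    {b : Mi d → (Fin d → ℝ) → ℝ} (hb : SmoothB b) (i : Fin d) :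
    SmoothB (covD Γ i b) := by
  intro m
  exact (contDiff_pd (hb m) i).sub (contDiff_Gop hΓ hb i m)

lemma pd_Gop {Γ : Christoffel d} (hΓ : SmoothGamma d Γ)
    {b : Mi d → (Fin d → ℝ) → ℝ} (hb : SmoothB b) (i j : Fin d) (m : Mi d)
    (x : Fin d → ℝ) :
    pd d i (fun y => Gop Γ j b m y) x =
      (∑ l : Fin d, ∑ k : Fin d, pd d i (Γ k j l) x * Eop l k b m x)
        + Gop Γ j (fun n => pd d i (b n)) m x := by
  unfold Gop
  rw [pd_sum _ _ (fun l _ => ContDiff.sum fun k _ => (hΓ k j l).mul (contDiff_Eop hb l k m)) i x]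
  rw [← Finset.sum_add_distrib]
  refine Finset.sum_congr rfl fun l _ => ?_
  rw [pd_sum _ _ (fun k _ => (hΓ k j l).mul (contDiff_Eop hb l k m)) i x]
  rw [← Finset.sum_add_distrib]
  refine Finset.sum_congr rfl fun k _ => ?_
  rw [pd_mul (hΓ k j l) (contDiff_Eop hb l k m) i x, pd_Eop hb l k i m x]

lemma sum4_comm (f : Fin d → Fin d → Fin d → Fin d → ℝ) :
    ∑ l : Fin d, ∑ k : Fin d, ∑ l' : Fin d, ∑ k' : Fin d, f l k l' k'
      = ∑ l' : Fin d, ∑ k' : Fin d, ∑ l : Fin d, ∑ k : Fin d, f l k l' k' := by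
  refine (Finset.sum_congr rfl fun l _ => Finset.sum_comm).trans ?_
  refine Finset.sum_comm.trans ?_
  refine Finset.sum_congr rfl fun l' _ => ?_
  exact (Finset.sum_congr rfl fun l _ => Finset.sum_comm).trans Finset.sum_comm

lemma Gop_Gop (Γ : Christoffel d) (i j : Fin d) (b : Mi d → (Fin d → ℝ) → ℝ)
    (m : Mi d) (x : Fin d → ℝ) :
    Gop Γ i (Gop Γ j b) m x =
      ∑ l : Fin d, ∑ k : Fin d, ∑ l' : Fin d, ∑ k' : Fin d,
        Γ k i l x * (Γ k' j l' x * Eop l k (Eop l' k' b) m x) := by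
  unfold Gop
  refine Finset.sum_congr rfl fun l _ => Finset.sum_congr rfl fun k _ => ?_
  rw [Eop_sum', Finset.mul_sum]
  refine Finset.sum_congr rfl fun l' _ => ?_
  rw [Eop_sum', Finset.mul_sum]
  refine Finset.sum_congr rfl fun k' _ => ?_
  rw [Eop_smul_fun]

lemma Gop_sub (Γ : Christoffel d) (i : Fin d) (f g : Mi d → (Fin d → ℝ) → ℝ)
    (m : Mi d) (x : Fin d → ℝ) :
    Gop Γ i (fun n y => f n y - g n y) m x = Gop Γ i f m x - Gop Γ i g m x := by
  unfold Gop
  simp only [Eop_sub, mul_sub, Finset.sum_sub_distrib]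

lemma Gop_comm (Γ : Christoffel d) (i j : Fin d) (b : Mi d → (Fin d → ℝ) → ℝ)
    (m : Mi d) (x : Fin d → ℝ) :
    Gop Γ i (Gop Γ j b) m x - Gop Γ j (Gop Γ i b) m x
      = -∑ l : Fin d, ∑ k : Fin d,
          (∑ mm : Fin d, (Γ k i mm x * Γ mm j l x - Γ k j mm x * Γ mm i l x))
            * Eop l k b m x := by
  rw [Gop_Gop, Gop_Gop,
    sum4_comm (fun l k l' k' => Γ k j l x * (Γ k' i l' x * Eop l k (Eop l' k' b) m x))]
  simp only [← Finset.sum_sub_distrib]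
  have key : ∀ l k l' k' : Fin d,
      Γ k i l x * (Γ k' j l' x * Eop l k (Eop l' k' b) m x)
        - Γ k' j l' x * (Γ k i l x * Eop l' k' (Eop l k b) m x)
      = (if k = l' then Γ k i l x * Γ k' j l' x * Eop l k' b m x else 0)
        - (if k' = l then Γ k i l x * Γ k' j l' x * Eop l' k b m x else 0) := by
    intro l k l' k'
    have h := Eop_comm l k l' k' b m x
    calc Γ k i l x * (Γ k' j l' x * Eop l k (Eop l' k' b) m x)
        - Γ k' j l' x * (Γ k i l x * Eop l' k' (Eop l k b) m x)
        = Γ k i l x * Γ k' j l' x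
            * (Eop l k (Eop l' k' b) m x - Eop l' k' (Eop l k b) m x) := by ring
      _ = Γ k i l x * Γ k' j l' x
            * ((if k = l' then Eop l k' b m x else 0)
                - (if k' = l then Eop l' k b m x else 0)) := by rw [h]
      _ = _ := by split_ifs <;> ring
  simp only [key]
  simp only [Finset.sum_sub_distrib]
  have hA : (∑ l : Fin d, ∑ k : Fin d, ∑ l' : Fin d, ∑ k' : Fin d,
        if k = l' then Γ k i l x * Γ k' j l' x * Eop l k' b m x else 0)
      = ∑ l : Fin d, ∑ k : Fin d, (∑ mm : Fin d, Γ k j mm x * Γ mm i l x) * Eop l k b m x := by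
    refine Finset.sum_congr rfl fun l _ => ?_
    rw [show (∑ k : Fin d, ∑ l' : Fin d, ∑ k' : Fin d,
          if k = l' then Γ k i l x * Γ k' j l' x * Eop l k' b m x else 0)
        = ∑ k : Fin d, ∑ k' : Fin d, ∑ l' : Fin d,
          if k = l' then Γ k i l x * Γ k' j l' x * Eop l k' b m x else 0 from
      Finset.sum_congr rfl fun k _ => Finset.sum_comm]
    rw [show (∑ k : Fin d, ∑ k' : Fin d, ∑ l' : Fin d,
          if k = l' then Γ k i l x * Γ k' j l' x * Eop l k' b m x else 0)
        = ∑ k : Fin d, ∑ k' : Fin d, Γ k i l x * Γ k' j k x * Eop l k' b m x from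
      Finset.sum_congr rfl fun k _ => Finset.sum_congr rfl fun k' _ => by
        rw [Finset.sum_ite_eq]; simp]
    rw [Finset.sum_comm]
    refine Finset.sum_congr rfl fun k' _ => ?_
    rw [Finset.sum_mul]
    refine Finset.sum_congr rfl fun k _ => by ring
  have hB : (∑ l : Fin d, ∑ k : Fin d, ∑ l' : Fin d, ∑ k' : Fin d,
        if k' = l then Γ k i l x * Γ k' j l' x * Eop l' k b m x else 0)
      = ∑ l : Fin d, ∑ k : Fin d, (∑ mm : Fin d, Γ k i mm x * Γ mm j l x) * Eop l k b m x := by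
    rw [show (∑ l : Fin d, ∑ k : Fin d, ∑ l' : Fin d, ∑ k' : Fin d,
          if k' = l then Γ k i l x * Γ k' j l' x * Eop l' k b m x else 0)
        = ∑ l : Fin d, ∑ k : Fin d, ∑ l' : Fin d, Γ k i l x * Γ l j l' x * Eop l' k b m x from
      Finset.sum_congr rfl fun l _ => Finset.sum_congr rfl fun k _ =>
        Finset.sum_congr rfl fun l' _ => by rw [Finset.sum_ite_eq']; simp]
    rw [show (∑ l : Fin d, ∑ k : Fin d, ∑ l' : Fin d, Γ k i l x * Γ l j l' x * Eop l' k b m x)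
        = ∑ l : Fin d, ∑ l' : Fin d, ∑ k : Fin d, Γ k i l x * Γ l j l' x * Eop l' k b m x from
      Finset.sum_congr rfl fun l _ => Finset.sum_comm]
    rw [Finset.sum_comm]
    refine Finset.sum_congr rfl fun l' _ => ?_
    rw [Finset.sum_comm]
    refine Finset.sum_congr rfl fun k _ => ?_
    rw [Finset.sum_mul]
  rw [hA, hB]
  simp only [sub_mul, Finset.sum_sub_distrib, neg_sub]

lemma covD_comm {Γ : Christoffel d} (hΓ : SmoothGamma d Γ)
    {b : Mi d → (Fin d → ℝ) → ℝ} (hb : SmoothB b) (i j : Fin d) (m : Mi d)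
    (x : Fin d → ℝ) :
    covD Γ i (covD Γ j b) m x - covD Γ j (covD Γ i b) m x
      = -∑ k : Fin d, ∑ l : Fin d,
          (if 1 ≤ m l then Riem d Γ i j k l x * (sig l k m k : ℝ) * b (sig l k m) x
            else 0) := by
  have hexp : ∀ i j : Fin d, covD Γ i (covD Γ j b) m x
      = pd d i (pd d j (b m)) x
        - ((∑ l : Fin d, ∑ k : Fin d, pd d i (Γ k j l) x * Eop l k b m x)
            + Gop Γ j (fun n => pd d i (b n)) m x)
        - Gop Γ i (fun n => pd d j (b n)) m x + Gop Γ i (Gop Γ j b) m x := by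
    intro i j
    show pd d i ((covD Γ j b) m) x - Gop Γ i (covD Γ j b) m x = _
    have h1 : (covD Γ j b) m = fun y => pd d j (b m) y - Gop Γ j b m y := rfl
    have h2 : Gop Γ i (covD Γ j b) m x
        = Gop Γ i (fun n => pd d j (b n)) m x - Gop Γ i (Gop Γ j b) m x := by
      rw [show covD Γ j b = fun n y => pd d j (b n) y - Gop Γ j b n y from rfl,
        Gop_sub]
    rw [h1, pd_sub (contDiff_pd (hb m) j) (contDiff_Gop hΓ hb j m) i x, h2,
      ← pd_Gop hΓ hb i j m x]
    ring
  have hGc := Gop_comm Γ i j b m x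
  have htarget : (∑ k : Fin d, ∑ l : Fin d,
        (if 1 ≤ m l then Riem d Γ i j k l x * (sig l k m k : ℝ) * b (sig l k m) x else 0))
      = ∑ l : Fin d, ∑ k : Fin d,
          (pd d i (Γ k j l) x - pd d j (Γ k i l) x
            + ∑ mm : Fin d, (Γ k i mm x * Γ mm j l x - Γ k j mm x * Γ mm i l x))
            * Eop l k b m x := by
    rw [show (∑ k : Fin d, ∑ l : Fin d,
          (if 1 ≤ m l then Riem d Γ i j k l x * (sig l k m k : ℝ) * b (sig l k m) x else 0))
        = ∑ l : Fin d, ∑ k : Fin d,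
          (if 1 ≤ m l then Riem d Γ i j k l x * (sig l k m k : ℝ) * b (sig l k m) x else 0)
        from Finset.sum_comm]
    refine Finset.sum_congr rfl fun l _ => Finset.sum_congr rfl fun k _ => ?_
    unfold Riem Eop
    split_ifs <;> ring
  rw [hexp i j, hexp j i, pd_comm (hb m) i j x, htarget]
  simp only [sub_mul, add_mul, Finset.sum_sub_distrib, Finset.sum_add_distrib,
    neg_sub, neg_add] at hGc ⊢
  linear_combination hGc


lemma nabla_eq (Γ : Christoffel d) (a : Omega d) (m : Mi d) (S : Finset (Fin d))
    (x : Fin d → ℝ) :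
    nablaOp d Γ a m S x
      = ∑ i ∈ S, sgn d i (S.erase i) * covD Γ i (fun n => a n (S.erase i)) m x := by
  refine Finset.sum_congr rfl fun i _ => ?_
  congr 1
  show pd d i (a m (S.erase i)) x - _ = pd d i (a m (S.erase i)) x - Gop Γ i _ m x
  congr 1
  refine Finset.sum_congr rfl fun j _ => Finset.sum_congr rfl fun k _ => ?_
  show (if 1 ≤ m j then
      Γ k i j x * ((((m + Finsupp.single k 1 - Finsupp.single j 1 : Mi d)) k : ℕ) : ℝ)
        * a (m + Finsupp.single k 1 - Finsupp.single j 1) (S.erase i) x else 0)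
    = Γ k i j x * Eop j k (fun n => a n (S.erase i)) m x
  unfold Eop sig
  split_ifs with h
  · ring
  · simp

lemma covD_sum {Γ : Christoffel d} {ι : Type*} (t : Finset ι) (c : ι → ℝ)
    (F : ι → Mi d → (Fin d → ℝ) → ℝ) (hF : ∀ p ∈ t, SmoothB (F p)) (i : Fin d)
    (m : Mi d) (x : Fin d → ℝ) :
    covD Γ i (fun n y => ∑ p ∈ t, c p * F p n y) m x
      = ∑ p ∈ t, c p * covD Γ i (F p) m x := by
  unfold covD
  have hpd : pd d i (fun y => ∑ p ∈ t, c p * F p m y) x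
      = ∑ p ∈ t, c p * pd d i (F p m) x := by
    rw [pd_sum t (fun p y => c p * F p m y) (fun p hp => contDiff_const.mul (hF p hp m)) i x]
    exact Finset.sum_congr rfl fun p hp => pd_const_mul (hF p hp m) (c p) i x
  have hG : Gop Γ i (fun n y => ∑ p ∈ t, c p * F p n y) m x
      = ∑ p ∈ t, c p * Gop Γ i (F p) m x := by
    unfold Gop
    calc (∑ l : Fin d, ∑ k : Fin d,
          Γ k i l x * Eop l k (fun n y => ∑ p ∈ t, c p * F p n y) m x)
        = ∑ l : Fin d, ∑ k : Fin d, ∑ p ∈ t, Γ k i l x * (c p * Eop l k (F p) m x) := by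
          refine Finset.sum_congr rfl fun l _ => Finset.sum_congr rfl fun k _ => ?_
          rw [Eop_sum' t (fun p n y => c p * F p n y) l k m x, Finset.mul_sum]
          refine Finset.sum_congr rfl fun p _ => ?_
          rw [Eop_smul_fun (fun _ => c p) (F p) l k m x]
      _ = ∑ p ∈ t, ∑ l : Fin d, ∑ k : Fin d, Γ k i l x * (c p * Eop l k (F p) m x) :=
          (Finset.sum_congr rfl fun l _ => Finset.sum_comm).trans Finset.sum_comm
      _ = ∑ p ∈ t, c p * ∑ l : Fin d, ∑ k : Fin d, Γ k i l x * Eop l k (F p) m x := by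
          refine Finset.sum_congr rfl fun p _ => ?_
          rw [Finset.mul_sum]
          refine Finset.sum_congr rfl fun l _ => ?_
          rw [Finset.mul_sum]
          exact Finset.sum_congr rfl fun k _ => by ring
  rw [hpd, hG, ← Finset.sum_sub_distrib]
  exact Finset.sum_congr rfl fun p _ => by ring

lemma erase_erase_comm (S : Finset (Fin d)) (i j : Fin d) :
    (S.erase i).erase j = (S.erase j).erase i := by
  ext a; simp only [Finset.mem_erase]; tauto

lemma sgn_insert (i j : Fin d) (T : Finset (Fin d)) (hj : j ∉ T) :
    sgn d i (insert j T) = (if j < i then -1 else 1) * sgn d i T := by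
  unfold sgn
  rw [Finset.filter_insert]
  split_ifs with h
  · rw [Finset.card_insert_of_notMem (fun hc => hj (Finset.mem_of_mem_filter j hc))]
    rw [pow_succ]
    ring
  · ring

lemma sgn_swap (S : Finset (Fin d)) (i j : Fin d) (hi : i ∈ S) (hj : j ∈ S)
    (hij : i ≠ j) :
    sgn d j (S.erase j) * sgn d i ((S.erase j).erase i)
      = -(sgn d i (S.erase i) * sgn d j ((S.erase i).erase j)) := by
  have hiT : i ∉ (S.erase i).erase j :=
    fun h => (Finset.notMem_erase i S) (Finset.mem_of_mem_erase h)
  have hjT : j ∉ (S.erase i).erase j := Finset.notMem_erase j _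
  have h1 : S.erase i = insert j ((S.erase i).erase j) :=
    (Finset.insert_erase (Finset.mem_erase.mpr ⟨hij.symm, hj⟩)).symm
  have h2 : S.erase j = insert i ((S.erase i).erase j) := by
    rw [erase_erase_comm S i j]
    exact (Finset.insert_erase (Finset.mem_erase.mpr ⟨hij, hi⟩)).symm
  rw [erase_erase_comm S j i]
  set T := (S.erase i).erase j with hT
  rw [h1, h2, sgn_insert j i T hiT, sgn_insert i j T hjT]
  rcases lt_or_gt_of_ne hij with h | h
  · rw [if_pos h, if_neg (asymm h)]; ring
  · rw [if_neg (asymm h), if_pos h]; ring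

end NablaSq
/-- For smooth Christoffel symbols `Γ^k_{ij}` symmetric in `i, j`,
the square of the covariant derivation `∇` on `Ω` is the action of the curvature:
`∇²a = R·a` with `R·a = −(1/2) dx^i dx^j (R_{ij})^k_l(x) y^l ∂a/∂y^k`, where
`(R_{ij})^k_l` is the Riemann curvature tensor of the connection. -/
theorem nabla_sq_eq_curvature (d : ℕ) (hd : 1 ≤ d) (Γ : Christoffel d)
    (hΓ : SmoothGamma d Γ) (hsym : TorsionFree d Γ) :
    ∀ a : Omega d, Smooth d a → nablaOp d Γ (nablaOp d Γ a) = curvAct d Γ a := by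
  intro a ha
  funext m S x
  have hslice : ∀ T : Finset (Fin d), SmoothB (fun n => a n T) := fun T n => ha n T
  rw [nabla_eq]
  have step1 : ∀ i : Fin d, covD Γ i (fun n => nablaOp d Γ a n (S.erase i)) m x
      = ∑ j ∈ S.erase i, sgn d j ((S.erase i).erase j)
          * covD Γ i (covD Γ j (fun n => a n ((S.erase i).erase j))) m x := by
    intro i
    have harg : (fun n => nablaOp d Γ a n (S.erase i))
        = fun n y => ∑ j ∈ S.erase i, sgn d j ((S.erase i).erase j)
            * covD Γ j (fun n' => a n' ((S.erase i).erase j)) n y := by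
      funext n y; exact nabla_eq Γ a n (S.erase i) y
    rw [harg, covD_sum (S.erase i) _ _ (fun j _ => smoothB_covD hΓ (hslice _) j) i m x]
  set c : Fin d → Fin d → ℝ :=
    fun i j => sgn d i (S.erase i) * sgn d j ((S.erase i).erase j) with hc
  set F : Fin d → Fin d → ℝ :=
    fun i j => covD Γ i (covD Γ j (fun n => a n ((S.erase i).erase j))) m x with hF
  have hstep : (∑ i ∈ S, sgn d i (S.erase i)
        * covD Γ i (fun n => nablaOp d Γ a n (S.erase i)) m x)
      = ∑ i ∈ S, ∑ j ∈ S.erase i, c i j * F i j := by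
    refine Finset.sum_congr rfl fun i _ => ?_
    rw [step1 i, Finset.mul_sum]
    exact Finset.sum_congr rfl fun j _ => by rw [hc, hF]; ring
  rw [hstep]
  have hcomm' : ∀ x y : Fin d, x ∈ S ∧ y ∈ S.erase x ↔ x ∈ S.erase y ∧ y ∈ S := by
    intro x y; simp only [Finset.mem_erase]; tauto
  have hswap : (∑ i ∈ S, ∑ j ∈ S.erase i, c i j * F i j)
      = ∑ i ∈ S, ∑ j ∈ S.erase i, (-(c i j)) * F j i := by
    calc (∑ i ∈ S, ∑ j ∈ S.erase i, c i j * F i j)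
        = ∑ j ∈ S, ∑ i ∈ S.erase j, c i j * F i j := Finset.sum_comm' hcomm'
      _ = ∑ i ∈ S, ∑ j ∈ S.erase i, (-(c i j)) * F j i := by
          refine Finset.sum_congr rfl fun i hi => Finset.sum_congr rfl fun j hj => ?_
          have hjS : j ∈ S := Finset.mem_of_mem_erase hj
          have hij : i ≠ j := fun h => (Finset.mem_erase.mp hj).1 h.symm
          have : c j i = -(c i j) := by
            rw [hc]
            exact sgn_swap S i j hi hjS hij
          rw [this]
  have h2 : (∑ i ∈ S, ∑ j ∈ S.erase i, c i j * F i j) * 2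
      = ∑ i ∈ S, ∑ j ∈ S.erase i, c i j * (F i j - F j i) := by
    have e1 : (∑ i ∈ S, ∑ j ∈ S.erase i, c i j * F i j) * 2
        = (∑ i ∈ S, ∑ j ∈ S.erase i, c i j * F i j)
          + (∑ i ∈ S, ∑ j ∈ S.erase i, (-(c i j)) * F j i) := by
      rw [← hswap]; ring
    rw [e1, ← Finset.sum_add_distrib]
    refine Finset.sum_congr rfl fun i _ => ?_
    rw [← Finset.sum_add_distrib]
    exact Finset.sum_congr rfl fun j _ => by ring
  have hcd : ∀ i ∈ S, ∀ j ∈ S.erase i, F i j - F j i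
      = -∑ k : Fin d, ∑ l : Fin d,
          (if 1 ≤ m l then Riem d Γ i j k l x * (sig l k m k : ℝ)
            * a (sig l k m) ((S.erase i).erase j) x else 0) := by
    intro i hi j hj
    have hcc := covD_comm hΓ (hslice ((S.erase i).erase j)) i j m x
    rw [hF]
    show covD Γ i (covD Γ j fun n => a n ((S.erase i).erase j)) m x
        - covD Γ j (covD Γ i fun n => a n ((S.erase j).erase i)) m x = _
    rw [erase_erase_comm S j i]
    exact hcc
  have hfin : (∑ i ∈ S, ∑ j ∈ S.erase i, c i j * (F i j - F j i))
      = 2 * curvAct d Γ a m S x := by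
    unfold curvAct
    rw [Finset.mul_sum, Finset.mul_sum]
    refine Finset.sum_congr rfl fun i hi => ?_
    rw [Finset.mul_sum, Finset.mul_sum]
    refine Finset.sum_congr rfl fun j hj => ?_
    rw [hcd i hi j hj, hc]
    have hinner : (∑ k : Fin d, ∑ l : Fin d,
          (if 1 ≤ m l then Riem d Γ i j k l x * (sig l k m k : ℝ)
            * a (sig l k m) ((S.erase i).erase j) x else 0))
        = ∑ k : Fin d, ∑ l : Fin d,
          (if 1 ≤ m l then
            Riem d Γ i j k l x
              * (((m + Finsupp.single k 1 - Finsupp.single l 1 : Mi d) k : ℕ) : ℝ)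
              * a (m + Finsupp.single k 1 - Finsupp.single l 1) ((S.erase i).erase j) x
          else 0) := rfl
    rw [hinner]
    ring
  have : (∑ i ∈ S, ∑ j ∈ S.erase i, c i j * F i j) * 2 = 2 * curvAct d Γ a m S x := by
    rw [h2, hfin]
  linarith

end FedosovModel
end
end

section
/- (Uniqueness/fixed-point lemma.) Let A be a fiberwise-vector-field-valued one-form all of whose terms have y-degree ≥ 2. If h ∈ Ω satisfies h = δ^{-1}(∇h + A·h), then h = 0. -/
/-!
Coordinate model of the Fedosov resolution on `M = ℝ^d`, following Dolgushev,
"Covariant and equivariant formality theorems".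

An element `a : Omega d` represents the exterior form with values in the formally
completed symmetric algebra of the cotangent bundle,
`a = ∑ a_{m,S}(x) y^m dx^S`, where `m` is the multi-index of exponents of the
commuting formal fibre variables `y^1, …, y^d` and `S` is the (increasingly
ordered) set of indices of the anticommuting `dx`'s; `a m S : (Fin d → ℝ) → ℝ`
is the corresponding (smooth) coefficient.
-/

noncomputable section
open scoped BigOperators

namespace FedosovModel

variable (d : ℕ)

lemma ydeg_add' {d : ℕ} (m m' : Mi d) :
    ydeg d (m + m') = ydeg d m + ydeg d m' := by
  simp [ydeg, Finset.sum_add_distrib]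

lemma ydeg_single' {d : ℕ} (j : Fin d) : ydeg d (Finsupp.single j 1) = 1 := by
  simp [ydeg, Finsupp.single_apply]

lemma ydeg_sub_single' {d : ℕ} (m : Mi d) (j : Fin d) (hj : 1 ≤ m j) :
    ydeg d (m - Finsupp.single j 1) + 1 = ydeg d m := by
  have hle : Finsupp.single j 1 ≤ m := by
    rw [Finsupp.single_le_iff]; exact hj
  have hc := tsub_add_cancel_of_le hle
  calc ydeg d (m - Finsupp.single j 1) + 1
      = ydeg d (m - Finsupp.single j 1) + ydeg d (Finsupp.single j 1) := by
        rw [ydeg_single']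
    _ = ydeg d (m - Finsupp.single j 1 + Finsupp.single j 1) :=
        (ydeg_add' _ _).symm
    _ = ydeg d m := by rw [hc]

/-- Uniqueness/fixed-point lemma. Let `A` be a
fiberwise-vector-field-valued one-form all of whose terms have `y`-degree `≥ 2`.
If `h ∈ Ω` satisfies `h = δ⁻¹(∇h + A·h)`, then `h = 0`. -/
theorem fixed_point_lemma (d : ℕ) (hd : 1 ≤ d) (Γ : Christoffel d)
    (hΓ : SmoothGamma d Γ) (hsym : TorsionFree d Γ)
    (A : VF1 d) (hA : SmoothVF1 d A) (hlow : LowDegVanish d A)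
    (h : Omega d) (hsm : Smooth d h)
    (hfix : h = deltaInv d (nablaOp d Γ h + vact d A h)) :
    h = 0 := by
  have key : ∀ n : ℕ, ∀ m : Mi d, ydeg d m = n → ∀ S : Finset (Fin d), h m S = 0 := by
    intro n
    induction n using Nat.strong_induction_on with
    | _ n ih =>
      intro m hm S
      have hz : ∀ m' : Mi d, ydeg d m' < n → ∀ S', h m' S' = 0 := by
        intro m' hm' S'
        exact ih _ (hm ▸ hm') m' rfl S'
      funext x
      show h m S x = 0
      conv_lhs => rw [hfix]
      show (((ydeg d m + S.card : ℕ) : ℝ))⁻¹ * _ = 0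
      refine mul_eq_zero_of_right _ (Finset.sum_eq_zero fun k _ => ?_)
      split_ifs with hk
      · obtain ⟨hkS, hmk⟩ := hk
        set m' : Mi d := m - Finsupp.single k 1 with hm'def
        have hdeg : ydeg d m' + 1 = n := hm ▸ ydeg_sub_single' m k hmk
        have hlt : ydeg d m' < n := by omega
        have h1 : nablaOp d Γ h m' (insert k S) x = 0 := by
          refine Finset.sum_eq_zero fun i _ => mul_eq_zero_of_right _ ?_
          have hpd : pd d i (h m' ((insert k S).erase i)) x = 0 := by
            rw [hz m' hlt]
            show (fderiv ℝ (fun _ => (0 : ℝ)) x) (Pi.single i 1) = 0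
            rw [fderiv_fun_const]
            simp
          rw [hpd, zero_sub, neg_eq_zero]
          refine Finset.sum_eq_zero fun j _ => Finset.sum_eq_zero fun kk _ => ?_
          split_ifs with hj
          · have hmj : 1 ≤ (m' + Finsupp.single kk 1 : Mi d) j := by
              rw [Finsupp.add_apply]
              omega
            have hdm : ydeg d (m' + Finsupp.single kk 1 - Finsupp.single j 1)
                = ydeg d m' := by
              have h2 := ydeg_sub_single' (m' + Finsupp.single kk 1) j hmj
              rw [ydeg_add', ydeg_single'] at h2
              omega
            simp only [hz _ (hdm ▸ hlt), Pi.zero_apply, mul_zero]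
          · rfl
        have h2 : vact d A h m' (insert k S) x = 0 := by
          refine Finset.sum_eq_zero fun kx _ => ?_
          refine mul_eq_zero_of_right _ (Finset.sum_eq_zero fun j _ =>
            Finset.sum_eq_zero fun p hp => ?_)
          rcases lt_or_ge (ydeg d p.1) 2 with hp1 | hp1
          · rw [hlow j kx p.1 hp1]
            simp
          · have hpadd : p.1 + p.2 = m' := Finset.HasAntidiagonal.mem_antidiagonal.mp hp
            have hyd : ydeg d p.1 + ydeg d p.2 = ydeg d m' := by
              rw [← ydeg_add', hpadd]
            have hlt2 : ydeg d (p.2 + Finsupp.single j 1) < n := by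
              rw [ydeg_add', ydeg_single']
              omega
            rw [hz _ hlt2]
            simp
        show sgn d k S * (nablaOp d Γ h + vact d A h) m' (insert k S) x = 0
        have : (nablaOp d Γ h + vact d A h) m' (insert k S) x
            = nablaOp d Γ h m' (insert k S) x + vact d A h m' (insert k S) x := rfl
        rw [this, h1, h2, add_zero, mul_zero]
      · rfl
  funext m S
  exact key (ydeg d m) m rfl S
end FedosovModel
end
end
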